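/- arXiv:math-ph/0703087 — 5 statements merged into one kernel-verified Lean document; each statement's English description precedes it below -/
import Mathlib

section
/- Let q = e^{2πi/3}. If a polynomial P ∈ ℂ[x,y] satisfies the exchange relation (q·x + y)·P(x,y) = (x + q·y)·P(y,x), then there exists a polynomial Q ∈ ℂ[x,y] with Q(x,y) = Q(y,x) such that P(x,y) = (x + q·y)·Q(x,y). -/
open MvPolynomial

noncomputable def q : ℂ := Complex.exp (2 * Real.pi * Complex.I / 3)

lemma q_cube : q ^ 3 = 1 := by
  rw [q, ← Complex.exp_nat_mul]
  norm_num
  rw [mul_div_cancel₀]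
  · exact Complex.exp_two_pi_mul_I
  · norm_num

lemma q_ne_one : q ≠ 1 := by
  intro hq
  rw [q, Complex.exp_eq_one_iff] at hq
  obtain ⟨n, hn⟩ := hq
  have h2 : (2 : ℂ) * Real.pi * Complex.I ≠ 0 := by
    simp [Real.pi_ne_zero, Complex.I_ne_zero, Complex.ofReal_ne_zero]
  field_simp at hn
  have key : (2 : ℂ) * Real.pi * Complex.I * 1 = 2 * Real.pi * Complex.I * (3 * n) := by
    linear_combination (2 * Real.pi * Complex.I) * hn
  have h3 := mul_left_cancel₀ h2 key
  have : ((1 : ℤ) : ℂ) = ((3 * n : ℤ) : ℂ) := by push_cast; linear_combination h3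
  have := Int.cast_injective (α := ℂ) this
  omega

lemma q_sq_ne_one : q ^ 2 ≠ 1 := by
  intro h
  have : q = 1 := by
    calc q = q ^ 3 := by rw [pow_succ, h, one_mul]
    _ = 1 := q_cube
  exact q_ne_one this

/-- If a polynomial `P ∈ ℂ[x,y]` satisfies the exchange relation
`(q·x + y)·P(x,y) = (x + q·y)·P(y,x)` with `q = e^{2πi/3}`, then
`P(x,y) = (x + q·y)·Q(x,y)` for some symmetric polynomial `Q`. -/
theorem exchange_factorization_two_vars (P : MvPolynomial (Fin 2) ℂ)
    (h : (C q * X 0 + X 1) * P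
        = (X 0 + C q * X 1) * rename (Equiv.swap (0 : Fin 2) 1) P) :
    ∃ Q : MvPolynomial (Fin 2) ℂ,
      rename (Equiv.swap (0 : Fin 2) 1) Q = Q ∧ P = (X 0 + C q * X 1) * Q := by
  classical
  set e := MvPolynomial.finSuccEquiv ℂ 1 with he
  set c : MvPolynomial (Fin 1) ℂ := -(C q * X 0) with hc
  set φ : MvPolynomial (Fin 2) ℂ →+* MvPolynomial (Fin 1) ℂ :=
    (Polynomial.evalRingHom c).comp e.toAlgHom.toRingHom with hφ
  have hφ0 : φ (X 0) = c := by
    simp [hφ, he, MvPolynomial.finSuccEquiv_X_zero]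
  have hφ1 : φ (X 1) = X 0 := by
    have h1 : (X 1 : MvPolynomial (Fin 2) ℂ) = X (Fin.succ 0) := rfl
    simp [hφ, he, h1, MvPolynomial.finSuccEquiv_X_succ]
  have hφC : ∀ a : ℂ, φ (C a) = C a := by
    intro a
    simp [hφ, he, MvPolynomial.finSuccEquiv_apply]
  -- apply φ to h
  have h2 := congrArg φ h
  rw [map_mul, map_mul, map_add, map_add, map_mul, map_mul, hφ0, hφ1, hφC] at h2
  have hzero : c + C q * X 0 = 0 := by rw [hc]; ring
  rw [hzero, zero_mul] at h2
  have hfac : (C q * c + X 0 : MvPolynomial (Fin 1) ℂ) = C (1 - q^2) * X 0 := by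
    rw [hc, map_sub, map_pow, map_one]; ring
  rw [hfac] at h2
  have hPzero : φ P = 0 := by
    have hne : (C (1 - q^2) * X 0 : MvPolynomial (Fin 1) ℂ) ≠ 0 := by
      apply mul_ne_zero
      · rw [Ne, MvPolynomial.C_eq_zero, sub_eq_zero]
        exact fun hh => q_sq_ne_one hh.symm
      · exact MvPolynomial.X_ne_zero 0
    exact (mul_eq_zero.mp h2).resolve_left hne
  -- so e P has root c
  have hroot : Polynomial.eval c (e P) = 0 := hPzero
  have hdvd : (Polynomial.X - Polynomial.C c) ∣ e P :=
    Polynomial.dvd_iff_isRoot.mpr hroot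
  obtain ⟨g, hg⟩ := hdvd
  -- the linear factor corresponds to X 0 + C q * X 1
  have hlin : e (X 0 + C q * X 1) = Polynomial.X - Polynomial.C c := by
    have h1 : (X 1 : MvPolynomial (Fin 2) ℂ) = X (Fin.succ 0) := rfl
    rw [map_add, map_mul, he, MvPolynomial.finSuccEquiv_X_zero, h1,
      MvPolynomial.finSuccEquiv_X_succ, hc]
    have : (MvPolynomial.finSuccEquiv ℂ 1) (C q) = Polynomial.C (C q) := by
      simp [MvPolynomial.finSuccEquiv_apply]
    rw [this, map_neg, map_mul, sub_neg_eq_add]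
  have hPfact : P = (X 0 + C q * X 1) * e.symm g := by
    apply e.injective
    rw [map_mul, hlin, AlgEquiv.apply_symm_apply]; exact hg
  refine ⟨e.symm g, ?_, hPfact⟩
  -- symmetry
  set Q := e.symm g with hQ
  have hswap : rename (Equiv.swap (0 : Fin 2) 1) ((X 0 + C q * X 1) * Q)
      = (X 1 + C q * X 0) * rename (Equiv.swap (0 : Fin 2) 1) Q := by
    rw [map_mul, map_add, map_mul, rename_X, rename_X, rename_C,
      Equiv.swap_apply_left, Equiv.swap_apply_right]
  rw [hPfact, hswap] at h
  have hk : ((C q * X 0 + X 1) * (X 0 + C q * X 1) : MvPolynomial (Fin 2) ℂ) ≠ 0 := by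
    apply mul_ne_zero
    · intro h0
      have := congrArg (eval ![(0:ℂ), 1]) h0
      simp at this
    · intro h0
      have := congrArg (eval ![(1:ℂ), 0]) h0
      simp at this
  have hcancel : (C q * X 0 + X 1) * (X 0 + C q * X 1) * rename (Equiv.swap (0 : Fin 2) 1) Q
      = (C q * X 0 + X 1) * (X 0 + C q * X 1) * Q := by
    linear_combination -h
  exact (mul_left_cancel₀ hk hcancel)
end

section
/- Let q ∈ ℂ with q ≠ 0, let n ≥ 1, and let P ∈ ℂ[z_1,…,z_{2n}] be a polynomial that is symmetric under all permutations of the variables z_1,…,z_n and whose degree in the variable z_{2n} is at most n−1. If the substitution z_{2n} ↦ −q·z_1 sends P to the zero polynomial in ℂ[z_1,…,z_{2n−1}], then P = 0. -/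
open MvPolynomial

/-- Uniqueness mechanism: if `P ∈ ℂ[z_1,…,z_{2n}]` is symmetric under all permutations
of the first `n` variables, has degree at most `n-1` in the last variable `z_{2n}`,
and the substitution `z_{2n} ↦ -q·z_1` sends `P` to the zero polynomial in
`ℂ[z_1,…,z_{2n-1}]`, then `P = 0` (for any `q ≠ 0`). -/
theorem vanishing_from_symmetry_and_degree (q : ℂ) (hq : q ≠ 0) (n : ℕ) (hn : 1 ≤ n)
    (P : MvPolynomial (Fin (2 * n)) ℂ)
    (hsym : ∀ σ : Equiv.Perm (Fin (2 * n)),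
      (∀ i : Fin (2 * n), n ≤ (i : ℕ) → σ i = i) → rename σ P = P)
    (hdeg : P.degreeOf (⟨2 * n - 1, by omega⟩ : Fin (2 * n)) ≤ n - 1)
    (hsub : aeval (fun i : Fin (2 * n) =>
        if h : (i : ℕ) < 2 * n - 1 then (X ⟨i, h⟩ : MvPolynomial (Fin (2 * n - 1)) ℂ)
        else -(C q) * X (⟨0, by omega⟩ : Fin (2 * n - 1))) P = 0) :
    P = 0 := by
  classical
  have h2n : 2 * n - 1 < 2 * n := by omega
  set L : Fin (2 * n) := ⟨2 * n - 1, h2n⟩ with hLdef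
  set Z : Fin (2 * n) := ⟨0, by omega⟩ with hZdef
  -- evaluation equals aeval (for ℂ-valued points)
  have heval_aeval : ∀ (u : Fin (2 * n) → ℂ) (p : MvPolynomial (Fin (2 * n)) ℂ),
      eval u p = aeval u p := by
    intro u p
    rw [← coe_aeval_eq_eval]
    rfl
  -- Claim A : vanishing on the hyperplane z_L = -q z_0
  have claimA : ∀ w : Fin (2 * n) → ℂ, w L = -q * w Z → eval w P = 0 := by
    intro w hw
    set u : Fin (2 * n - 1) → ℂ := fun i => w ⟨(i : ℕ), by omega⟩ with hu
    have h0 := congrArg (aeval (R := ℂ) u) hsub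
    rw [map_zero] at h0
    rw [MvPolynomial.comp_aeval_apply] at h0
    rw [heval_aeval]
    have hfun : (fun j : Fin (2 * n) => aeval (R := ℂ) u
        (if h : (j : ℕ) < 2 * n - 1 then (X ⟨↑j, h⟩ : MvPolynomial (Fin (2 * n - 1)) ℂ)
         else -(C q) * X ⟨0, by omega⟩)) = w := by
      funext j
      by_cases hj : (j : ℕ) < 2 * n - 1
      · simp only [hj, dif_pos, aeval_X, hu]
      · have hjL : j = L := by
          apply Fin.ext
          simp only [hLdef]
          omega
        simp only [hj, dif_neg, not_false_iff, map_mul, map_neg, aeval_C, aeval_X,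
          Algebra.algebraMap_self_apply, hjL, hw]
        simp [hu, hZdef, hLdef]
    rw [← hfun]
    exact h0
  -- Claim B : vanishing on z_L = -q z_i for all i < n
  have claimB : ∀ i : Fin (2 * n), (i : ℕ) < n →
      ∀ w : Fin (2 * n) → ℂ, w L = -q * w i → eval w P = 0 := by
    intro i hi w hw
    set σ : Equiv.Perm (Fin (2 * n)) := Equiv.swap Z i with hσ
    have hfix : ∀ j : Fin (2 * n), n ≤ (j : ℕ) → σ j = j := by
      intro j hj
      apply Equiv.swap_apply_of_ne_of_ne
      · intro hjZ; rw [hjZ] at hj; simp only [hZdef] at hj; omega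
      · intro hji; rw [hji] at hj; omega
    have hP : rename σ P = P := hsym σ hfix
    have : eval w P = eval (w ∘ σ) P := by
      conv_lhs => rw [← hP]
      exact eval_rename σ P (g := w)
    rw [this]
    apply claimA
    have hσL : σ L = L := hfix L (by simp only [hLdef]; omega)
    have hσZ : σ Z = i := Equiv.swap_apply_left Z i
    simp only [Function.comp_apply, hσL, hσZ, hw]
  -- Key : vanishing whenever the first n coordinates are distinct
  have key : ∀ v : Fin (2 * n) → ℂ,
      (∀ i j : Fin (2 * n), (i : ℕ) < n → (j : ℕ) < n → v i = v j → i = j) →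
      eval v P = 0 := by
    intro v hinj
    set g : Fin (2 * n) → Polynomial ℂ :=
      fun i => if i = L then Polynomial.X else Polynomial.C (v i) with hg
    set f : Polynomial ℂ := MvPolynomial.aeval g P with hf
    -- evaluation of f
    have hfeval : ∀ t : ℂ, f.eval t = eval (Function.update v L t) P := by
      intro t
      have h1 : f.eval t = Polynomial.aeval t f := by
        rw [Polynomial.coe_aeval_eq_eval]
      have hfun : (fun j : Fin (2 * n) => Polynomial.aeval t (g j)) =
          Function.update v L t := by
        funext j
        by_cases hj : j = L
        · subst hj; simp [hg]
        · simp [hg, hj, Function.update_apply]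
      rw [h1, hf, MvPolynomial.comp_aeval_apply, heval_aeval, hfun]
    -- degree bound for f
    have hfdeg : f.natDegree ≤ n - 1 := by
      rw [hf]
      conv_lhs => rw [P.as_sum]
      rw [map_sum]
      apply Polynomial.natDegree_sum_le_of_forall_le
      intro m hm
      rw [MvPolynomial.aeval_monomial]
      refine le_trans (Polynomial.natDegree_mul_le) ?_
      have hc : (algebraMap ℂ (Polynomial ℂ) (coeff m P)).natDegree = 0 := by
        simp [Polynomial.algebraMap_eq]
      rw [hc, zero_add]
      refine le_trans (Polynomial.natDegree_prod_le m.support _) ?_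
      have hterm : ∀ i ∈ m.support,
          (g i ^ m i).natDegree ≤ if i = L then m L else 0 := by
        intro i _
        refine le_trans (Polynomial.natDegree_pow_le) ?_
        by_cases hiL : i = L
        · simp [hg, hiL]
        · simp [hg, hiL]
      refine le_trans (Finset.sum_le_sum hterm) ?_
      rw [Finset.sum_ite_eq' m.support L (fun _ => m L)]
      have hmL : m L ≤ n - 1 := by
        refine le_trans ?_ hdeg
        rw [MvPolynomial.degreeOf_eq_sup]
        exact Finset.le_sup (f := fun m => m L) hm
      split <;> omega
    -- f has n distinct roots
    have hf0 : f = 0 := by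
      apply Polynomial.eq_zero_of_natDegree_lt_card_of_eval_eq_zero f
        (f := fun i : Fin n => -q * v ⟨(i : ℕ), by omega⟩)
      · intro a b hab
        have h1 : v ⟨(a : ℕ), by omega⟩ = v ⟨(b : ℕ), by omega⟩ :=
          mul_left_cancel₀ (neg_ne_zero.mpr hq) hab
        have h2 := hinj _ _ (by simp [a.isLt]) (by simp [b.isLt]) h1
        have h3 : (a : ℕ) = (b : ℕ) := by simpa using congrArg Fin.val h2
        exact Fin.ext h3
      · intro i
        rw [hfeval]
        set i' : Fin (2 * n) := ⟨(i : ℕ), by omega⟩ with hi'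
        have hi'L : i' ≠ L := by
          intro h
          have := congrArg Fin.val h
          simp only [hi', hLdef] at this
          omega
        apply claimB i' (by simp [hi', i.isLt])
        rw [Function.update_self, Function.update_of_ne hi'L]
      · rw [Fintype.card_fin]
        omega
    have := hfeval (v L)
    rw [hf0, Function.update_eq_self, Polynomial.eval_zero] at this
    exact this.symm
  -- Vandermonde factor
  set S : Finset (Fin (2 * n) × Fin (2 * n)) :=
    Finset.univ.filter (fun p => (p.1 : ℕ) < (p.2 : ℕ) ∧ (p.2 : ℕ) < n) with hS
  set V : MvPolynomial (Fin (2 * n)) ℂ := ∏ p ∈ S, (X p.1 - X p.2) with hV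
  have hVP : V * P = 0 := by
    apply MvPolynomial.funext
    intro v
    rw [map_mul, map_zero]
    by_cases hv : ∀ i j : Fin (2 * n), (i : ℕ) < n → (j : ℕ) < n → v i = v j → i = j
    · rw [key v hv, mul_zero]
    · push_neg at hv
      obtain ⟨i, j, hi, hj, hvij, hij⟩ := hv
      have hVv : eval v V = 0 := by
        rw [hV, map_prod]
        rcases lt_trichotomy (i : ℕ) (j : ℕ) with h | h | h
        · refine Finset.prod_eq_zero (i := (i, j)) ?_ ?_
          · simp only [hS, Finset.mem_filter, Finset.mem_univ, true_and]
            exact ⟨h, hj⟩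
          · simp [hvij, sub_eq_zero]
        · exact absurd (Fin.ext h) hij
        · refine Finset.prod_eq_zero (i := (j, i)) ?_ ?_
          · simp only [hS, Finset.mem_filter, Finset.mem_univ, true_and]
            exact ⟨h, hi⟩
          · simp [hvij, sub_eq_zero]
      rw [hVv, zero_mul]
  have hVne : V ≠ 0 := by
    rw [hV]
    rw [Finset.prod_ne_zero_iff]
    intro p hp
    apply sub_ne_zero.mpr
    intro hXX
    have h1 := MvPolynomial.X_injective hXX
    have h2 : (p.1 : ℕ) < (p.2 : ℕ) := by
      simp only [hS, Finset.mem_filter] at hp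
      exact hp.2.1
    rw [h1] at h2
    omega
  rcases mul_eq_zero.mp hVP with h | h
  · exact absurd h hVne
  · exact h
end

section
/- Let q = e^{2πi/3}. Suppose (P_n)_{n≥1} and (Q_n)_{n≥1} are two sequences with P_n, Q_n ∈ ℂ[z_1,…,z_{2n}], each of degree at most n−1 in every variable, each symmetric separately under permutations of (z_1,…,z_n) and under permutations of (z_{n+1},…,z_{2n}), and each satisfying the recursion F_n(z_1,…,z_{2n−1}, −q·z_1) = ∏_{j=2}^{n} q·(z_1 − q·z_j) · ∏_{j=n+1}^{2n−1} q·(z_1 + q·z_j) · F_{n−1}(z_2,…,z_{2n−1}) for all n ≥ 2. If P_1 = Q_1, then P_n = Q_n for all n ≥ 1. -/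
open MvPolynomial

lemma eval_aeval'' {σ τ : Type*} (f : σ → MvPolynomial τ ℂ) (y : τ → ℂ) (p : MvPolynomial σ ℂ) :
    eval y (aeval f p) = eval (fun i => eval y (f i)) p := by
  induction p using MvPolynomial.induction_on with
  | C a => simp
  | add p q hp hq => simp only [map_add, hp, hq]
  | mul_X p i hp => simp only [map_mul, aeval_X, eval_mul, eval_X, hp]

lemma polyeval_aeval'' {σ : Type*} (f : σ → Polynomial ℂ) (t : ℂ) (p : MvPolynomial σ ℂ) :
    Polynomial.eval t (aeval f p) = eval (fun i => (f i).eval t) p := by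
  induction p using MvPolynomial.induction_on with
  | C a => simp
  | add p q hp hq => simp only [map_add, Polynomial.eval_add, hp, hq]
  | mul_X p i hp => simp only [map_mul, aeval_X, Polynomial.eval_mul, eval_mul, eval_X, hp]

lemma natDegree_aeval_le'' {m : ℕ} (p : MvPolynomial (Fin m) ℂ) (x : Fin m → ℂ) (k : Fin m) :
    (aeval (fun i => if i = k then (Polynomial.X : Polynomial ℂ) else Polynomial.C (x i)) p).natDegree
      ≤ p.degreeOf k := by
  conv_lhs => rw [p.as_sum, map_sum]
  apply Polynomial.natDegree_sum_le_of_forall_le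
  intro d hd
  rw [aeval_monomial]
  refine le_trans (Polynomial.natDegree_mul_le) ?_
  have h1 : (algebraMap ℂ (Polynomial ℂ) (coeff d p)).natDegree = 0 := Polynomial.natDegree_C _
  rw [h1, zero_add]
  refine le_trans ?_ (monomial_le_degreeOf k hd)
  rw [Finsupp.prod]
  refine le_trans (Polynomial.natDegree_prod_le _ _) ?_
  have h2 : ∀ i ∈ d.support, ((if i = k then (Polynomial.X : Polynomial ℂ) else Polynomial.C (x i)) ^ d i).natDegree = if i = k then d k else 0 := by
    intro i _
    by_cases h : i = k
    · subst h; rw [if_pos rfl, if_pos rfl, Polynomial.natDegree_X_pow]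
    · rw [if_neg h, if_neg h, ← Polynomial.C_pow, Polynomial.natDegree_C]
  rw [Finset.sum_congr rfl h2, Finset.sum_ite_eq' d.support k (fun _ => d k)]
  split <;> simp

lemma step'' (n : ℕ) (hn : 2 ≤ n) (A : MvPolynomial (Fin (2*n)) ℂ)
    (hdeg : ∀ i : Fin (2*n), A.degreeOf i ≤ n - 1)
    (hsym : ∀ σ : Equiv.Perm (Fin (2*n)), (∀ i : Fin (2*n), ((σ i : ℕ) < n ↔ (i : ℕ) < n)) →
      rename σ A = A)
    (hrec : aeval (fun i : Fin (2*n) =>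
        if h : (i : ℕ) < 2*n-1 then (X ⟨i, h⟩ : MvPolynomial (Fin (2*n-1)) ℂ)
        else -(C q) * X (⟨0, Nat.sub_pos_of_lt (by omega)⟩ : Fin (2*n-1))) A = 0) :
    A = 0 := by
  classical
  have hq0 : q ≠ 0 := Complex.exp_ne_zero _
  set lastI : Fin (2*n) := ⟨2*n-1, by omega⟩ with hlastI
  -- A vanishes whenever the last coordinate equals -q times the 0th coordinate
  have hvan : ∀ x : Fin (2*n) → ℂ, x lastI = -q * x ⟨0, by omega⟩ → eval x A = 0 := by
    intro x hx
    have h0 := congrArg (eval (fun j : Fin (2*n-1) => x ⟨j, by omega⟩)) hrec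
    rw [eval_aeval'', map_zero] at h0
    have hxeq : (fun i : Fin (2*n) => eval (fun j : Fin (2*n-1) => x ⟨j, by omega⟩)
        ((fun i : Fin (2*n) =>
          if h : (i : ℕ) < 2*n-1 then (X ⟨i, h⟩ : MvPolynomial (Fin (2*n-1)) ℂ)
          else -(C q) * X (⟨0, Nat.sub_pos_of_lt (by omega)⟩ : Fin (2*n-1))) i)) = x := by
      funext i
      by_cases h : (i : ℕ) < 2*n-1
      · simp only [dif_pos h, eval_X]
      · have hi : i = lastI := by
          have := i.isLt; apply Fin.ext; simp only [hlastI]; omega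
        simp only [dif_neg h]; rw [hi, hx]; simp
    rw [hxeq] at h0
    exact h0
  -- by symmetry, A vanishes whenever the last coordinate equals -q * x i, i < n
  have hvan2 : ∀ x : Fin (2*n) → ℂ, ∀ i : Fin (2*n), (i : ℕ) < n →
      x lastI = -q * x i → eval x A = 0 := by
    intro x i hi hx
    set i0 : Fin (2*n) := ⟨0, by omega⟩ with hi0
    have hi0n : (i0 : ℕ) < n := show (0:ℕ) < n by omega
    set σ := Equiv.swap i0 i with hσdef
    have hσ : ∀ j : Fin (2*n), ((σ j : ℕ) < n ↔ (j : ℕ) < n) := by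
      intro j
      rw [hσdef, Equiv.swap_apply_def]
      split_ifs with h1 h2
      · rw [h1]; exact iff_of_true hi hi0n
      · rw [h2]; exact iff_of_true hi0n hi
      · exact Iff.rfl
    have hA : rename σ A = A := hsym σ hσ
    have hlne0 : lastI ≠ i0 := by
      intro h; have := congrArg Fin.val h; simp only [hlastI, hi0] at this; omega
    have hlnei : lastI ≠ i := by
      intro h; have := congrArg Fin.val h; simp only [hlastI] at this; omega
    have h1 : eval (x ∘ σ) A = 0 := by
      apply hvan
      show x (σ lastI) = -q * x (σ ⟨0, by omega⟩)
      have hfix : σ lastI = lastI := Equiv.swap_apply_of_ne_of_ne hlne0 hlnei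
      have hsw : σ (⟨0, by omega⟩ : Fin (2*n)) = i := Equiv.swap_apply_left i0 i
      rw [hfix, hsw]
      exact hx
    calc eval x A = eval x (rename σ A) := by rw [hA]
      _ = eval (x ∘ σ) A := by rw [eval_rename]
      _ = 0 := h1
  -- main vanishing on points injective on the first n coordinates
  have hmain : ∀ x : Fin (2*n) → ℂ,
      (∀ i j : Fin (2*n), (i : ℕ) < n → (j : ℕ) < n → x i = x j → i = j) →
      eval x A = 0 := by
    intro x hinj
    set p := aeval (fun j : Fin (2*n) =>
      if j = lastI then (Polynomial.X : Polynomial ℂ) else Polynomial.C (x j)) A with hp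
    have hdegp : p.natDegree ≤ n - 1 :=
      le_trans (natDegree_aeval_le'' A x lastI) (hdeg lastI)
    have heval : ∀ t : ℂ, p.eval t = eval (Function.update x lastI t) A := by
      intro t
      rw [hp, polyeval_aeval'']
      have hfun : (fun j : Fin (2*n) => Polynomial.eval t
          (if j = lastI then Polynomial.X else Polynomial.C (x j)))
          = Function.update x lastI t := by
        funext j
        by_cases h : j = lastI
        · rw [h]; simp
        · simp [h]
      rw [hfun]
    let f : Fin n → ℂ := fun i => -q * x ⟨(i : ℕ), by omega⟩
    have hfinj : Function.Injective f := by
      intro a b hab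
      have h1 : x ⟨(a : ℕ), by omega⟩ = x ⟨(b : ℕ), by omega⟩ :=
        mul_left_cancel₀ (neg_ne_zero.mpr hq0) hab
      have h2 := hinj _ _ (show ((⟨(a:ℕ), by omega⟩ : Fin (2*n)) : ℕ) < n from a.isLt)
        (show ((⟨(b:ℕ), by omega⟩ : Fin (2*n)) : ℕ) < n from b.isLt) h1
      have := congrArg Fin.val h2
      exact Fin.ext this
    have hroots : ∀ i : Fin n, p.eval (f i) = 0 := by
      intro i
      rw [heval]
      have hne : (⟨(i:ℕ), by omega⟩ : Fin (2*n)) ≠ lastI := by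
        intro h; have := congrArg Fin.val h; simp only [hlastI] at this
        have := i.isLt; omega
      apply hvan2 _ ⟨(i : ℕ), by omega⟩ i.isLt
      rw [Function.update_self, Function.update_of_ne hne]
    have hp0 : p = 0 :=
      Polynomial.eq_zero_of_natDegree_lt_card_of_eval_eq_zero p hfinj hroots
        (by rw [Fintype.card_fin]; omega)
    have hfin := heval (x lastI)
    rw [hp0, Function.update_eq_self, Polynomial.eval_zero] at hfin
    exact hfin.symm
  -- multiply by a Vandermonde factor and use funext
  set S := Finset.univ.filter (fun i : Fin (2*n) => (i : ℕ) < n) with hS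
  set V : MvPolynomial (Fin (2*n)) ℂ := ∏ pr ∈ S.offDiag, (X pr.1 - X pr.2) with hV
  have hVne : V ≠ 0 := by
    intro h
    have h2 := congrArg (eval (fun i : Fin (2*n) => ((i : ℕ) : ℂ))) h
    rw [hV, map_prod, map_zero] at h2
    rw [Finset.prod_eq_zero_iff] at h2
    obtain ⟨pr, hpr, h0⟩ := h2
    rw [Finset.mem_offDiag] at hpr
    simp only [map_sub, eval_X] at h0
    have h3 : (((pr.1 : ℕ)) : ℂ) = ((pr.2 : ℕ) : ℂ) := sub_eq_zero.mp h0
    exact hpr.2.2 (Fin.ext (Nat.cast_injective h3))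
  have hAV : A * V = 0 := by
    apply MvPolynomial.funext
    intro x
    rw [map_zero, map_mul]
    by_cases hx : eval x V = 0
    · rw [hx, mul_zero]
    · rw [hmain x ?_, zero_mul]
      intro i j hi hj hij
      by_contra hne
      apply hx
      rw [hV, map_prod]
      refine Finset.prod_eq_zero (i := (i, j)) ?_ ?_
      · rw [Finset.mem_offDiag]
        refine ⟨by simp [hS, hi], by simp [hS, hj], ?_⟩
        simpa using hne
      · simp only [map_sub, eval_X]
        rw [hij, sub_self]
  rcases mul_eq_zero.mp hAV with h | h
  · exact h
  · exact absurd h hVne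

/-- Uniqueness of the solution of the recursion (recur-tilde): two sequences of polynomials
`P_n, Q_n ∈ ℂ[z_1,…,z_{2n}]`, of degree at most `n-1` in each variable, symmetric separately
under permutations of the first `n` and of the last `n` variables, both satisfying the
recursion for all `n ≥ 2`, and agreeing at `n = 1`, agree for all `n ≥ 1`. -/
theorem recursion_unique_solution
    (P Q : (n : ℕ) → MvPolynomial (Fin (2 * n)) ℂ)
    (hPdeg : ∀ n, 1 ≤ n → ∀ i : Fin (2 * n), (P n).degreeOf i ≤ n - 1)
    (hQdeg : ∀ n, 1 ≤ n → ∀ i : Fin (2 * n), (Q n).degreeOf i ≤ n - 1)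
    (hPsym : ∀ n, ∀ σ : Equiv.Perm (Fin (2 * n)),
      (∀ i : Fin (2 * n), ((σ i : ℕ) < n ↔ (i : ℕ) < n)) → rename σ (P n) = P n)
    (hQsym : ∀ n, ∀ σ : Equiv.Perm (Fin (2 * n)),
      (∀ i : Fin (2 * n), ((σ i : ℕ) < n ↔ (i : ℕ) < n)) → rename σ (Q n) = Q n)
    (hPrec : ∀ n, ∀ hn : 2 ≤ n,
      aeval (fun i : Fin (2 * n) =>
          if h : (i : ℕ) < 2 * n - 1 then (X ⟨i, h⟩ : MvPolynomial (Fin (2 * n - 1)) ℂ)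
          else -(C q) * X (⟨0, by omega⟩ : Fin (2 * n - 1))) (P n)
      = (∏ j ∈ Finset.univ.filter
            (fun j : Fin (2 * n - 1) => 1 ≤ (j : ℕ) ∧ (j : ℕ) ≤ n - 1),
          C q * (X (⟨0, by omega⟩ : Fin (2 * n - 1)) - C q * X j))
        * (∏ j ∈ Finset.univ.filter (fun j : Fin (2 * n - 1) => n ≤ (j : ℕ)),
          C q * (X (⟨0, by omega⟩ : Fin (2 * n - 1)) + C q * X j))
        * rename (fun i : Fin (2 * (n - 1)) =>
            (⟨(i : ℕ) + 1, by have := i.isLt; omega⟩ : Fin (2 * n - 1)))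
            (P (n - 1)))
    (hQrec : ∀ n, ∀ hn : 2 ≤ n,
      aeval (fun i : Fin (2 * n) =>
          if h : (i : ℕ) < 2 * n - 1 then (X ⟨i, h⟩ : MvPolynomial (Fin (2 * n - 1)) ℂ)
          else -(C q) * X (⟨0, by omega⟩ : Fin (2 * n - 1))) (Q n)
      = (∏ j ∈ Finset.univ.filter
            (fun j : Fin (2 * n - 1) => 1 ≤ (j : ℕ) ∧ (j : ℕ) ≤ n - 1),
          C q * (X (⟨0, by omega⟩ : Fin (2 * n - 1)) - C q * X j))
        * (∏ j ∈ Finset.univ.filter (fun j : Fin (2 * n - 1) => n ≤ (j : ℕ)),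
          C q * (X (⟨0, by omega⟩ : Fin (2 * n - 1)) + C q * X j))
        * rename (fun i : Fin (2 * (n - 1)) =>
            (⟨(i : ℕ) + 1, by have := i.isLt; omega⟩ : Fin (2 * n - 1)))
            (Q (n - 1)))
    (hinit : P 1 = Q 1) :
    ∀ n, 1 ≤ n → P n = Q n := by
  intro n
  induction n with
  | zero => intro h; exact absurd h (by omega)
  | succ m ih =>
    intro _
    by_cases hm : m = 0
    · subst hm; exact hinit
    · have h2 : 2 ≤ m + 1 := by omega
      have hprev : P m = Q m := ih (by omega)
      have hrec0 : aeval (fun i : Fin (2*(m+1)) =>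
          if h : (i : ℕ) < 2*(m+1)-1 then (X ⟨i, h⟩ : MvPolynomial (Fin (2*(m+1)-1)) ℂ)
          else -(C q) * X (⟨0, by omega⟩ : Fin (2*(m+1)-1)))
          (P (m+1) - Q (m+1)) = 0 := by
        rw [map_sub, hPrec (m+1) h2, hQrec (m+1) h2]
        have hprev' : P (m + 1 - 1) = Q (m + 1 - 1) := hprev
        rw [hprev', sub_self]
      have hz := step'' (m+1) h2 (P (m+1) - Q (m+1))
        (fun i => le_trans (degreeOf_sub_le i _ _)
          (max_le (hPdeg _ (by omega) i) (hQdeg _ (by omega) i)))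
        (fun σ hσ => by rw [map_sub, hPsym _ σ hσ, hQsym _ σ hσ])
        hrec0
      exact sub_eq_zero.mp hz
end

section
/- Let n ≥ 1. The Schur polynomial s_{Y_n} in 2n variables evaluated at the point (1,1,…,1) satisfies s_{Y_n}(1,…,1) = 3^{n(n−1)/2} · ∏_{i=1}^{n} (3i−2)! / (n+i−1)!. -/
open MvPolynomial

/-- Complete homogeneous symmetric polynomial with integer index (zero for negative index). -/
noncomputable def hInt (N : ℕ) (m : ℤ) : MvPolynomial (Fin N) ℂ :=
  if 0 ≤ m then MvPolynomial.hsymm (Fin N) ℂ m.toNat else 0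

/-- Schur polynomial in `N` variables for the partition `lam` (padded with zeros to `L` parts),
defined by the Jacobi–Trudi determinant `det (h_{λ_i - i + j})`. -/
noncomputable def schur (N : ℕ) {L : ℕ} (lam : Fin L → ℕ) : MvPolynomial (Fin N) ℂ :=
  Matrix.det (Matrix.of fun i j : Fin L => hInt N ((lam i : ℤ) - (i : ℤ) + (j : ℤ)))

/-- The partition `Y_n = (n-1,n-1,n-2,n-2,…,1,1)`, padded with zeros to `2n` parts. -/
def Ypart (n : ℕ) : Fin (2 * n) → ℕ := fun i => n - 1 - (i : ℕ) / 2

open Finset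


/-- the increasing sequence 0,1,3,4,6,7,… -/
def ff (t : ℕ) : ℕ := 3 * (t / 2) + t % 2

lemma ff_strictMono : StrictMono ff := by
  intro a b hab
  unfold ff
  omega

lemma eval_ones_hsymm (N k : ℕ) :
    eval (fun _ : Fin N => (1:ℂ)) (hsymm (Fin N) ℂ k) = ((N + k - 1).choose k : ℂ) := by
  rw [hsymm, map_sum]
  have h : ∀ s : Sym (Fin N) k, eval (fun _ : Fin N => (1:ℂ)) ((s.1.map X).prod) = 1 := by
    intro s
    rw [map_multiset_prod]
    simp [Multiset.map_map, Function.comp]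
  simp only [h, Finset.sum_const, nsmul_eq_mul, mul_one, Finset.card_univ]
  rw [Sym.card_sym_eq_choose, Fintype.card_fin]

/-- Chu–Vandermonde over `range N`. -/
lemma choose_sum_range (N a b : ℕ) (hN : 1 ≤ N) :
    (a + b).choose (N - 1) = ∑ k ∈ range N, a.choose k * b.choose (N - 1 - k) := by
  rw [Nat.add_choose_eq, Finset.Nat.antidiagonal_eq_map, Finset.sum_map]
  have : N - 1 + 1 = N := by omega
  rw [this]
  rfl

section detpart

lemma key_det (n : ℕ) (hn : 1 ≤ n) :
    eval (fun _ : Fin (2 * n) => (1 : ℂ)) (schur (2 * n) (Ypart n))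
      = (∏ k : Fin (2 * n), ((k : ℕ).factorial : ℂ))⁻¹
        * ∏ i : Fin (2 * n), ∏ j ∈ Ioi i, ((ff (j : ℕ) : ℂ) - (ff (i : ℕ) : ℂ)) := by
  classical
  set N := 2 * n with hN
  have hN1 : 1 ≤ N := by omega
  -- eval of the determinant
  rw [schur, RingHom.map_det, RingHom.mapMatrix_apply]
  set M : Matrix (Fin N) (Fin N) ℂ :=
    (Matrix.of fun i j : Fin N => hInt N ((Ypart n i : ℤ) - (i : ℤ) + (j : ℤ))).map
      (eval fun _ : Fin N => (1:ℂ)) with hM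
  rw [← Matrix.det_submatrix_equiv_self (Fin.revPerm : Equiv.Perm (Fin N)) M]
  -- identify the reversed matrix entries
  have hrev : ∀ k : Fin N, ((Fin.revPerm k : Fin N) : ℕ) = N - 1 - (k : ℕ) := by
    intro k
    simp [Fin.revPerm, Fin.val_rev]
    omega
  have entry : ∀ i j : Fin N,
      M.submatrix Fin.revPerm Fin.revPerm i j
        = ((ff (i : ℕ) + (N - 1 - (j : ℕ))).choose (N - 1) : ℂ) := by
    intro i j
    have hiN : (i : ℕ) < N := i.isLt
    have hjN : (j : ℕ) < N := j.isLt
    set a : ℕ := N - 1 - (i : ℕ) with ha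
    set b : ℕ := N - 1 - (j : ℕ) with hb
    have hY : Ypart n (Fin.revPerm i) = n - 1 - a / 2 := by
      have h := hrev i
      simp only [Ypart]
      omega
    have hval : M.submatrix Fin.revPerm Fin.revPerm i j
        = eval (fun _ : Fin N => (1:ℂ)) (hInt N ((↑(n - 1 - a / 2) : ℤ) - (a : ℤ) + (b : ℤ))) := by
      simp only [Matrix.submatrix_apply, hM, Matrix.map_apply, Matrix.of_apply]
      rw [hY, hrev i, hrev j]
    rw [hval]
    have hffi : ff (i : ℕ) = (n - 1 - a / 2) + (N - 1 - a) := by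
      unfold ff
      omega
    by_cases hpos : (0:ℤ) ≤ (↑(n - 1 - a / 2) : ℤ) - (a : ℤ) + (b : ℤ)
    · rw [hInt, if_pos hpos, eval_ones_hsymm]
      congr 1
      have htn : ((↑(n - 1 - a / 2) : ℤ) - (a : ℤ) + (b : ℤ)).toNat
          = (n - 1 - a / 2) + b - a := by omega
      rw [htn]
      have h1 : N + ((n - 1 - a / 2) + b - a) - 1 = ff (i : ℕ) + b := by
        rw [hffi]; omega
      rw [h1]
      have h2 : ff (i : ℕ) + b - ((n - 1 - a / 2) + b - a) = N - 1 := by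
        rw [hffi]; omega
      rw [← h2]
      exact (Nat.choose_symm (show n - 1 - a / 2 + b - a ≤ ff (i:ℕ) + b by rw [hffi]; omega)).symm
    · rw [hInt, if_neg hpos, map_zero]
      have : ff (i : ℕ) + b < N - 1 := by
        rw [hffi]; omega
      rw [Nat.choose_eq_zero_of_lt this, Nat.cast_zero]
  -- factor as product of two matrices
  set Bd : Matrix (Fin N) (Fin N) ℂ :=
    Matrix.of fun i k : Fin N => ((ff (i : ℕ)).descFactorial (k : ℕ) : ℂ) with hBd
  set Bm : Matrix (Fin N) (Fin N) ℂ :=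
    Matrix.of fun i k : Fin N => (((k : ℕ).factorial : ℂ))⁻¹ * Bd i k with hBm
  set T : Matrix (Fin N) (Fin N) ℂ :=
    Matrix.of fun k j : Fin N => ((N - 1 - (j : ℕ)).choose (N - 1 - (k : ℕ)) : ℂ) with hT
  have hfact : M.submatrix Fin.revPerm Fin.revPerm = Bm * T := by
    ext i j
    rw [entry i j, Matrix.mul_apply]
    have hBmk : ∀ k : Fin N, Bm i k = ((ff (i:ℕ)).choose (k:ℕ) : ℂ) := by
      intro k
      rw [hBm]
      simp only [Matrix.of_apply, hBd]
      rw [Nat.descFactorial_eq_factorial_mul_choose]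
      push_cast
      rw [← mul_assoc, inv_mul_cancel₀ (by exact_mod_cast Nat.factorial_ne_zero (k:ℕ)), one_mul]
    simp only [hBmk, hT, Matrix.of_apply]
    rw [choose_sum_range N (ff (i:ℕ)) (N - 1 - (j:ℕ)) hN1]
    push_cast
    rw [← Fin.sum_univ_eq_sum_range (fun k => ((ff (i:ℕ)).choose k : ℂ) * ((N - 1 - (j:ℕ)).choose (N - 1 - k) : ℂ)) N]
  rw [hfact, Matrix.det_mul]
  -- determinant of T
  have hTdet : T.det = 1 := by
    rw [Matrix.det_of_lowerTriangular T]
    · apply Finset.prod_eq_one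
      intro k _
      simp [hT, Nat.choose_self]
    · intro k j hkj
      simp only [hT, Matrix.of_apply]
      rw [Nat.choose_eq_zero_of_lt (by
        have h1 : (k:ℕ) < (j:ℕ) := hkj
        have := j.isLt
        omega)]
      exact Nat.cast_zero
  -- determinant of Bm via column scaling
  have hBmdet : Bm.det = (∏ k : Fin N, ((k : ℕ).factorial : ℂ))⁻¹ * Bd.det := by
    have h := Matrix.det_mul_row (fun k : Fin N => (((k : ℕ).factorial : ℂ))⁻¹) Bd
    rw [hBm]
    exact h.trans (by rw [Finset.prod_inv_distrib])
  -- determinant of Bd via monic polynomials and vandermonde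
  have hBddet : Bd.det = ∏ i : Fin N, ∏ j ∈ Ioi i, ((ff (j : ℕ) : ℂ) - (ff (i : ℕ) : ℂ)) := by
    have hBdeval : Bd = Matrix.of fun i j : Fin N =>
        Polynomial.eval ((ff (i : ℕ) : ℂ)) (descPochhammer ℂ (j : ℕ)) := by
      ext i j
      simp [hBd, descPochhammer_eval_eq_descFactorial]
    rw [hBdeval,
      ← Matrix.det_eval_matrixOfPolynomials_eq_det_vandermonde
        (fun i : Fin N => (ff (i : ℕ) : ℂ)) (fun k : Fin N => descPochhammer ℂ (k : ℕ))
        (fun k => descPochhammer_natDegree (R := ℂ) (k : ℕ))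
        (fun k => monic_descPochhammer ℂ (k : ℕ)),
      Matrix.det_vandermonde]
  rw [hTdet, mul_one, hBmdet, hBddet]

end detpart


def Pnat (m : ℕ) : ℕ := ∏ j ∈ range m, ∏ i ∈ range j, (ff j - ff i)

lemma prod_range_double {M : Type*} [CommMonoid M] (g : ℕ → M) (n : ℕ) :
    ∏ i ∈ range (2 * n), g i = ∏ s ∈ range n, (g (2*s) * g (2*s+1)) := by
  induction n with
  | zero => simp
  | succ n ih =>
    rw [show 2 * (n+1) = 2*n + 1 + 1 by ring, prod_range_succ, prod_range_succ,
      prod_range_succ, ih, mul_assoc]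

lemma K1 (n : ℕ) : ∏ s ∈ range n, (3*s+3) = 3^n * n.factorial := by
  induction n with
  | zero => simp
  | succ n ih =>
    rw [prod_range_succ, ih, Nat.factorial_succ, pow_succ]
    ring

lemma K2 (n : ℕ) : ∏ s ∈ range n, ((3*s+2) * ((3*s+3) * (3*s+4))) = (3*n+1).factorial := by
  induction n with
  | zero => simp
  | succ n ih =>
    rw [prod_range_succ, ih, show 3*(n+1)+1 = (3*n+1)+1+1+1 by ring,
      Nat.factorial_succ ((3*n+1)+1+1), Nat.factorial_succ ((3*n+1)+1),
      Nat.factorial_succ (3*n+1)]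
    ring

lemma step1 (n : ℕ) :
    ∏ i ∈ range (2*n), (ff (2*n) - ff i) = ∏ s ∈ range n, ((3*s+3) * (3*s+2)) := by
  rw [prod_range_double (fun i => ff (2*n) - ff i) n,
    ← Finset.prod_range_reflect (fun s => (3*s+3) * (3*s+2)) n]
  apply Finset.prod_congr rfl
  intro s hs
  simp only [mem_range] at hs
  have h1 : ff (2*n) - ff (2*s) = 3*(n - 1 - s)+3 := by unfold ff; omega
  have h2 : ff (2*n) - ff (2*s+1) = 3*(n - 1 - s)+2 := by unfold ff; omega
  rw [h1, h2]

lemma step2 (n : ℕ) :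
    ∏ i ∈ range (2*n+1), (ff (2*n+1) - ff i) = ∏ s ∈ range n, ((3*s+4) * (3*s+3)) := by
  rw [prod_range_succ, prod_range_double (fun i => ff (2*n+1) - ff i) n,
    show ff (2*n+1) - ff (2*n) = 1 by unfold ff; omega, mul_one,
    ← Finset.prod_range_reflect (fun s => (3*s+4) * (3*s+3)) n]
  apply Finset.prod_congr rfl
  intro s hs
  simp only [mem_range] at hs
  have h1 : ff (2*n+1) - ff (2*s) = 3*(n - 1 - s)+4 := by unfold ff; omega
  have h2 : ff (2*n+1) - ff (2*s+1) = 3*(n - 1 - s)+3 := by unfold ff; omega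
  rw [h1, h2]

lemma Pnat_eq (n : ℕ) :
    Pnat (2*n) = 3^(n*(n-1)/2) * (∏ i ∈ Icc 1 n, (3*i-2).factorial)
      * ∏ k ∈ range n, k.factorial := by
  induction n with
  | zero => simp [Pnat]
  | succ n ih =>
    have hP : Pnat (2*(n+1)) = Pnat (2*n)
        * ((∏ i ∈ range (2*n), (ff (2*n) - ff i))
          * (∏ i ∈ range (2*n+1), (ff (2*n+1) - ff i))) := by
      unfold Pnat
      rw [show 2*(n+1) = 2*n+1+1 by ring, prod_range_succ, prod_range_succ, mul_assoc]
    rw [hP, ih, step1, step2]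
    have hcomb : (∏ s ∈ range n, ((3*s+3) * (3*s+2)))
        * (∏ s ∈ range n, ((3*s+4) * (3*s+3)))
        = (3^n * n.factorial) * (3*n+1).factorial := by
      rw [← K1 n, ← K2 n, ← Finset.prod_mul_distrib, ← Finset.prod_mul_distrib]
      apply Finset.prod_congr rfl
      intro s _
      ring
    rw [hcomb]
    rw [Finset.prod_Icc_succ_top (by omega : 1 ≤ n+1), prod_range_succ,
      Nat.triangle_succ n, pow_add,
      show 3*(n+1)-2 = 3*n+1 by omega]
    ring


lemma prodC (m : ℕ) :
    ∏ i : Fin m, ∏ j ∈ Ioi i, ((ff (j:ℕ) : ℂ) - (ff (i:ℕ) : ℂ)) = (Pnat m : ℂ) := by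
  rw [Finset.prod_comm' (fun (i j : Fin m) => by
    simp [Finset.mem_Ioi, Finset.mem_Iio] :
    ∀ (i j : Fin m), i ∈ univ ∧ j ∈ Ioi i ↔ i ∈ Iio j ∧ j ∈ univ)]
  rw [Pnat, Nat.cast_prod]
  rw [← Fin.prod_univ_eq_prod_range (fun j => ((∏ i ∈ range j, (ff j - ff i) : ℕ) : ℂ)) m]
  apply Finset.prod_congr rfl
  intro j _
  have hconv : ∏ i ∈ Iio j, ((ff (j:ℕ) : ℂ) - (ff (i:ℕ) : ℂ))
      = ∏ i ∈ range (j:ℕ), ((ff (j:ℕ) : ℂ) - (ff i : ℂ)) := by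
    have hm : 0 < m := j.pos
    refine Finset.prod_nbij' (fun i : Fin m => (i : ℕ)) (fun k : ℕ => ⟨k % m, Nat.mod_lt _ hm⟩)
      ?_ ?_ ?_ ?_ ?_
    · intro a ha; simp only [mem_Iio, Fin.lt_def] at ha; simpa using ha
    · intro k hk; simp only [mem_range] at hk
      simp only [mem_Iio, Fin.lt_def]
      have : k < m := lt_trans hk j.isLt
      simpa [Nat.mod_eq_of_lt this] using hk
    · intro a ha; simp only [mem_Iio, Fin.lt_def] at ha
      exact Fin.ext (by simp [Nat.mod_eq_of_lt (lt_trans ha j.isLt)])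
    · intro k hk; simp only [mem_range] at hk
      simp [Nat.mod_eq_of_lt (lt_trans hk j.isLt)]
    · intro a ha; rfl
  rw [hconv, Nat.cast_prod]
  apply Finset.prod_congr rfl
  intro i hi
  simp only [mem_range] at hi
  rw [Nat.cast_sub (le_of_lt (ff_strictMono hi))]

/-- Homogeneous-point sum rule: `s_{Y_n}(1,…,1) = 3^{n(n-1)/2} ∏_{i=1}^n (3i-2)!/(n+i-1)!`. -/
theorem schur_Y_eval_ones (n : ℕ) (hn : 1 ≤ n) :
    eval (fun _ : Fin (2 * n) => (1 : ℂ)) (schur (2 * n) (Ypart n))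
      = 3 ^ (n * (n - 1) / 2)
        * ∏ i ∈ Finset.Icc 1 n,
            (Nat.factorial (3 * i - 2) : ℂ) / (Nat.factorial (n + i - 1) : ℂ) := by
  rw [key_det n hn, prodC (2*n), Pnat_eq n]
  rw [Fin.prod_univ_eq_prod_range (fun k => ((Nat.factorial k : ℕ) : ℂ)) (2*n)]
  have hsplit : (∏ k ∈ range n, Nat.factorial k) * (∏ i ∈ Icc 1 n, Nat.factorial (n + i - 1))
      = ∏ k ∈ range (2*n), Nat.factorial k := by
    rw [← Finset.prod_range_mul_prod_Ico (fun k => Nat.factorial k) (show n ≤ 2*n by omega)]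
    congr 1
    rw [Finset.prod_Ico_eq_prod_range, ← Finset.Ico_add_one_right_eq_Icc, Finset.prod_Ico_eq_prod_range]
    apply Finset.prod_congr (by congr 1; omega)
    intro i _
    congr 1
    omega
  have hF0 : (∏ k ∈ range (2*n), ((Nat.factorial k : ℕ) : ℂ)) ≠ 0 :=
    Finset.prod_ne_zero_iff.mpr fun k _ => by
      exact_mod_cast Nat.factorial_ne_zero k
  have hD0 : (∏ i ∈ Icc 1 n, ((Nat.factorial (n + i - 1) : ℕ) : ℂ)) ≠ 0 :=
    Finset.prod_ne_zero_iff.mpr fun k _ => by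
      exact_mod_cast Nat.factorial_ne_zero (n + k - 1)
  rw [Finset.prod_div_distrib, inv_mul_eq_div, ← mul_div_assoc, div_eq_div_iff hF0 hD0]
  push_cast
  have hC : (∏ k ∈ range n, ((Nat.factorial k : ℕ) : ℂ))
      * (∏ i ∈ Icc 1 n, ((Nat.factorial (n + i - 1) : ℕ) : ℂ))
      = ∏ k ∈ range (2*n), ((Nat.factorial k : ℕ) : ℂ) := by
    exact_mod_cast congrArg (Nat.cast : ℕ → ℂ) hsplit
  linear_combination (3:ℂ)^(n*(n-1)/2) * (∏ i ∈ Icc 1 n, ((Nat.factorial (3*i-2) : ℕ) : ℂ)) * hC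
end

section
/- For every integer n ≥ 0 the following identity holds in ℚ: (1 / (2^n · (2n+1)!)) · ∏_{j=1}^{n} ( j! · (3j+1)! / ( j · ((2j−1)!)² ) ) = ∏_{j=1}^{n+1} (3j−2)! / (n+j)!. -/
open Finset

private def numP (m : ℕ) : ℚ := ∏ i ∈ range m, ((3 * i + 1).factorial : ℚ)

private def denP (n : ℕ) : ℚ := ∏ i ∈ range (n + 1), ((n + 1 + i).factorial : ℚ)

private lemma denP_ne_zero (n : ℕ) : denP n ≠ 0 := by
  refine Finset.prod_ne_zero_iff.2 fun i _ => ?_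
  exact_mod_cast (Nat.factorial_pos _).ne'

private lemma denP_succ (n : ℕ) :
    denP (n + 1) * ((n + 1).factorial : ℚ)
      = denP n * ((2 * n + 2).factorial : ℚ) * ((2 * n + 3).factorial : ℚ) := by
  have h1 := Finset.prod_range_succ' (fun i => (((n + 1) + i).factorial : ℚ)) (n + 2)
  have h2 := Finset.prod_range_succ (fun i => (((n + 1) + i).factorial : ℚ)) (n + 2)
  have h3 := Finset.prod_range_succ (fun i => (((n + 1) + i).factorial : ℚ)) (n + 1)
  have e1 : ∀ i : ℕ, (n + 1) + (i + 1) = (n + 2) + i := fun i => by omega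
  have : (∏ i ∈ range (n + 2), (((n + 2) + i).factorial : ℚ)) * ((n + 1).factorial : ℚ)
      = ∏ i ∈ range (n + 3), (((n + 1) + i).factorial : ℚ) := by
    rw [show n + 3 = n + 2 + 1 from rfl, h1]
    simp only [add_zero]
    congr 1
    exact Finset.prod_congr rfl fun i _ => by rw [e1 i]
  unfold denP
  rw [show n + 1 + 1 = n + 2 from rfl, this, show n + 3 = n + 2 + 1 from rfl, h2,
    show n + 2 = n + 1 + 1 from rfl, h3]
  have : n + 1 + (n + 1) = 2 * n + 2 := by omega
  rw [this]
  have : n + 1 + (n + 1 + 1) = 2 * n + 3 := by omega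
  rw [this]

private lemma range_version (n : ℕ) :
    (1 / ((2 : ℚ) ^ n * ((2 * n + 1).factorial : ℚ)))
      * ∏ i ∈ range n,
          (((i + 1).factorial : ℚ) * ((3 * i + 4).factorial : ℚ))
            / (((i : ℚ) + 1) * (((2 * i + 1).factorial : ℚ)) ^ 2)
      = numP (n + 1) / denP n := by
  induction n with
  | zero => simp [numP, denP]
  | succ n ih =>
    rw [Finset.prod_range_succ, ← mul_assoc]
    have key : (1 / ((2 : ℚ) ^ (n+1) * ((2 * (n+1) + 1).factorial : ℚ)))
        * ∏ i ∈ range n,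
            (((i + 1).factorial : ℚ) * ((3 * i + 4).factorial : ℚ))
              / (((i : ℚ) + 1) * (((2 * i + 1).factorial : ℚ)) ^ 2)
        = (numP (n + 1) / denP n) *
          (((2 * n + 1).factorial : ℚ) / (2 * ((2 * (n+1) + 1).factorial : ℚ))) := by
      rw [← ih]
      have hf : ((2 * n + 1).factorial : ℚ) ≠ 0 := by
        exact_mod_cast (Nat.factorial_pos _).ne'
      have hf2 : ((2 * (n+1) + 1).factorial : ℚ) ≠ 0 := by
        exact_mod_cast (Nat.factorial_pos _).ne'
      have h2 : (2 : ℚ) ^ n ≠ 0 := by positivity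
      field_simp
      ring
    rw [key]
    -- now combine with the extra factor
    have hnum : numP (n + 2) = numP (n + 1) * ((3 * (n + 1) + 1).factorial : ℚ) := by
      unfold numP; rw [Finset.prod_range_succ]
    have hdenne := denP_ne_zero n
    have hdenne' := denP_ne_zero (n + 1)
    have hds := denP_succ n
    have hf1 : ((n + 1).factorial : ℚ) ≠ 0 := by exact_mod_cast (Nat.factorial_pos _).ne'
    have hf2 : ((2 * n + 1).factorial : ℚ) ≠ 0 := by exact_mod_cast (Nat.factorial_pos _).ne'
    have hf3 : ((2 * (n+1) + 1).factorial : ℚ) ≠ 0 := by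
      exact_mod_cast (Nat.factorial_pos _).ne'
    have hn1 : ((n : ℚ) + 1) ≠ 0 := by positivity
    -- factorial expansions
    have e1 : ((2 * n + 2).factorial : ℚ) = (2 * n + 2) * ((2 * n + 1).factorial : ℚ) := by
      rw [show 2 * n + 2 = (2 * n + 1) + 1 from rfl, Nat.factorial_succ]; push_cast; ring
    have e2 : ((2 * n + 3).factorial : ℚ) = (2 * n + 3) * (2 * n + 2) * ((2 * n + 1).factorial : ℚ) := by
      rw [show 2 * n + 3 = (2 * n + 2) + 1 from rfl, Nat.factorial_succ]
      push_cast
      rw [e1]; ring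
    have e3 : ((2 * (n + 1) + 1).factorial : ℚ)
        = (2 * n + 3) * (2 * n + 2) * ((2 * n + 1).factorial : ℚ) := by
      rw [show 2 * (n + 1) + 1 = (2 * n + 2) + 1 from rfl, Nat.factorial_succ]
      push_cast
      rw [e1]; ring
    have e4 : (3 * n + 4) = 3 * (n + 1) + 1 := by omega
    -- goal
    rw [hnum, ← e4]
    have hdp : denP (n + 1)
        = denP n * ((2 * n + 2).factorial : ℚ) * ((2 * n + 3).factorial : ℚ)
          / ((n + 1).factorial : ℚ) := by
      rw [eq_div_iff hf1]; exact hds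
    rw [hdp, e1, e2, e3]
    field_simp

/-- The factorial identity
`(1/(2^n (2n+1)!)) ∏_{j=1}^n j!(3j+1)!/(j ((2j-1)!)²) = ∏_{j=1}^{n+1} (3j-2)!/(n+j)!` in `ℚ`. -/
theorem factorial_identity (n : ℕ) :
    (1 / ((2 : ℚ) ^ n * (Nat.factorial (2 * n + 1) : ℚ)))
      * ∏ j ∈ Finset.Icc 1 n,
          ((Nat.factorial j : ℚ) * (Nat.factorial (3 * j + 1) : ℚ))
            / ((j : ℚ) * ((Nat.factorial (2 * j - 1) : ℚ)) ^ 2)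
      = ∏ j ∈ Finset.Icc 1 (n + 1),
          (Nat.factorial (3 * j - 2) : ℚ) / (Nat.factorial (n + j) : ℚ) := by
  have hL : ∏ j ∈ Finset.Icc 1 n,
      ((Nat.factorial j : ℚ) * (Nat.factorial (3 * j + 1) : ℚ))
        / ((j : ℚ) * ((Nat.factorial (2 * j - 1) : ℚ)) ^ 2)
      = ∏ i ∈ range n,
          (((i + 1).factorial : ℚ) * ((3 * i + 4).factorial : ℚ))
            / (((i : ℚ) + 1) * (((2 * i + 1).factorial : ℚ)) ^ 2) := by
    rw [show Finset.Icc 1 n = Finset.Ico 1 (n + 1) from rfl,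
      Finset.prod_Ico_eq_prod_range]
    simp only [Nat.add_sub_cancel]
    refine Finset.prod_congr rfl fun i _ => ?_
    have h1 : 3 * (1 + i) + 1 = 3 * i + 4 := by omega
    have h2 : 2 * (1 + i) - 1 = 2 * i + 1 := by omega
    have h3 : 1 + i = i + 1 := by omega
    rw [h1, h2, h3]
    push_cast
    ring_nf
  have hR : ∏ j ∈ Finset.Icc 1 (n + 1),
      (Nat.factorial (3 * j - 2) : ℚ) / (Nat.factorial (n + j) : ℚ)
      = numP (n + 1) / denP n := by
    rw [show Finset.Icc 1 (n + 1) = Finset.Ico 1 (n + 2) from rfl,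
      Finset.prod_Ico_eq_prod_range]
    simp only [Nat.add_sub_cancel, show n + 2 - 1 = n + 1 from rfl]
    rw [Finset.prod_div_distrib]
    unfold numP denP
    congr 1
    · refine Finset.prod_congr rfl fun i _ => ?_
      have : 3 * (1 + i) - 2 = 3 * i + 1 := by omega
      rw [this]
    · refine Finset.prod_congr rfl fun i _ => ?_
      have : n + (1 + i) = n + 1 + i := by omega
      rw [this]
  rw [hL, hR]
  exact range_version n
end
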